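/- Let X be a Hausdorff space, κ an infinite cardinal, and suppose every point of X has a neighbourhood base of size ≤ κ (χ(X) ≤ κ). If the cellularity of X is at most κ, then |X| ≤ 2^κ. (Hajnal–Juhász inequality, derived as a corollary of the pwL_c bound.) -/

import Mathlib

open Set Cardinal

universe u

theorem hj_dense_subfamily {X : Type u} [TopologicalSpace X] (κ : Cardinal.{u})
    (hc : ∀ 𝒞 : Set (Set X), (∀ C ∈ 𝒞, IsOpen C ∧ C.Nonempty) →
      𝒞.PairwiseDisjoint id → #𝒞 ≤ κ)
    (𝒰 : Set (Set X)) (h𝒰 : ∀ U ∈ 𝒰, IsOpen U) :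
    ∃ 𝒱 ⊆ 𝒰, #𝒱 ≤ κ ∧ ⋃₀ 𝒰 ⊆ closure (⋃₀ 𝒱) := by
  classical
  set S : Set (Set (Set X)) :=
    {sig | (∀ O ∈ sig, O.Nonempty ∧ IsOpen O ∧ ∃ U ∈ 𝒰, O ⊆ U) ∧ sig.PairwiseDisjoint id}
    with hS
  obtain ⟨sig, hmaximal⟩ : ∃ m, Maximal (· ∈ S) m := by
    apply zorn_subset
    intro c hcS hchain
    refine ⟨⋃₀ c, ⟨?_, ?_⟩, fun s hs => subset_sUnion_of_mem hs⟩
    · rintro O ⟨t, htc, hOt⟩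
      exact (hcS htc).1 O hOt
    · rintro O1 ⟨t1, ht1, hO1⟩ O2 ⟨t2, ht2, hO2⟩ hne
      rcases hchain.total ht1 ht2 with h | h
      · exact (hcS ht2).2 (h hO1) hO2 hne
      · exact (hcS ht1).2 hO1 (h hO2) hne
  have hsigS : sig ∈ S := hmaximal.1
  have hmax : ∀ a ∈ S, sig ⊆ a → a = sig := fun a ha hsub => (hmaximal.2 ha hsub).antisymm hsub
  -- choose a member of 𝒰 above each O ∈ sig
  have hch : ∀ O ∈ sig, ∃ U ∈ 𝒰, O ⊆ U := fun O hO => (hsigS.1 O hO).2.2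
  choose u hu hOu using hch
  refine ⟨{V | ∃ O, ∃ h : O ∈ sig, V = u O h}, ?_, ?_, ?_⟩
  · rintro V ⟨O, hO, rfl⟩; exact hu O hO
  · have : #{V | ∃ O, ∃ h : O ∈ sig, V = u O h} ≤ #sig := by
      apply mk_le_of_surjective (f := fun O : sig => (⟨u O.1 O.2, O.1, O.2, rfl⟩ :
        {V | ∃ O, ∃ h : O ∈ sig, V = u O h}))
      rintro ⟨V, O, hO, rfl⟩
      exact ⟨⟨O, hO⟩, rfl⟩
    exact this.trans (hc sig (fun C hC => ⟨(hsigS.1 C hC).2.1, (hsigS.1 C hC).1⟩) hsigS.2)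
  · rintro x ⟨U, hU𝒰, hxU⟩
    rw [mem_closure_iff]
    intro V hV hxV
    by_cases hmeet : ∃ O ∈ sig, ((V ∩ U) ∩ O).Nonempty
    · obtain ⟨O, hO, y, hy⟩ := hmeet
      exact ⟨y, hy.1.1, u O hO, ⟨O, hO, rfl⟩, hOu O hO hy.2⟩
    · exfalso
      push_neg at hmeet
      have hVU : (V ∩ U) ∉ sig := by
        intro hmem
        have := hmeet _ hmem
        rw [inter_self] at this
        exact absurd this (nonempty_iff_ne_empty.mp ⟨x, hxV, hxU⟩)
      have : insert (V ∩ U) sig = sig := by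
        apply hmax _ _ (subset_insert _ _)
        constructor
        · rintro O (rfl | hO)
          · exact ⟨⟨x, hxV, hxU⟩, hV.inter (h𝒰 U hU𝒰), U, hU𝒰, inter_subset_right⟩
          · exact hsigS.1 O hO
        · intro O1 h1 O2 h2 hne
          rcases h1 with rfl | h1 <;> rcases h2 with rfl | h2
          · exact absurd rfl hne
          · simpa [Function.onFun, disjoint_comm] using
              (disjoint_iff_inter_eq_empty.mpr (hmeet _ h2))
          · simpa [Function.onFun] using
              (disjoint_iff_inter_eq_empty.mpr (hmeet _ h1)).symm
          · exact hsigS.2 h1 h2 hne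
      exact hVU (this ▸ mem_insert _ _)

theorem hj_surj {α K : Type u} {s : Set α} (hs : s.Nonempty) (hcard : #s ≤ #K) :
    ∃ f : K → α, (∀ i, f i ∈ s) ∧ ∀ a ∈ s, ∃ i, f i = a := by
  obtain ⟨emb⟩ := (Cardinal.le_def _ _).mp hcard
  haveI : Nonempty s := hs.to_subtype
  refine ⟨fun i => (Function.invFun emb i : s).1, fun i => (Function.invFun emb i).2, ?_⟩
  intro a ha
  refine ⟨emb ⟨a, ha⟩, ?_⟩
  show ((Function.invFun emb (emb ⟨a, ha⟩) : s) : α) = a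
  rw [Function.leftInverse_invFun emb.injective ⟨a, ha⟩]

theorem hj_mk_iUnion_Iio {X : Type u} {Θ : Ordinal.{u}} {f : Iio Θ → Set X}
    {c : Cardinal.{u}} (hc : ℵ₀ ≤ c) (h1 : Θ.card ≤ c) (h2 : ∀ o', #(f o') ≤ c) :
    #(⋃ o', f o') ≤ c := by
  have heq : (⋃ o', f o') = ⋃ i : Θ.ToType, f ((Ordinal.ToType.mk (o := Θ)).symm i) := by
    apply subset_antisymm
    · rintro x ⟨s, ⟨o', rfl⟩, hx⟩
      exact mem_iUnion.2 ⟨Ordinal.ToType.mk (o := Θ) o', by simpa using hx⟩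
    · rintro x ⟨s, ⟨i, rfl⟩, hx⟩
      exact mem_iUnion.2 ⟨(Ordinal.ToType.mk (o := Θ)).symm i, hx⟩
  rw [heq]
  calc #(⋃ i : Θ.ToType, f ((Ordinal.ToType.mk (o := Θ)).symm i))
      ≤ #Θ.ToType * ⨆ i : Θ.ToType, #(f ((Ordinal.ToType.mk (o := Θ)).symm i)) := mk_iUnion_le _
    _ ≤ c * c := by
        apply mul_le_mul'
        · rw [Cardinal.mk_toType]; exact h1
        · exact ciSup_le' fun i => h2 _
    _ = c := mul_eq_self hc

noncomputable def hjChain {X : Type u} (F : Set X → Set X) : Ordinal.{u} → Set X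
  | o => F (⋃ o' : Iio o, hjChain F o'.1)
termination_by o => o
decreasing_by exact o'.2

theorem hjChain_eq {X : Type u} (F : Set X → Set X) (o : Ordinal.{u}) :
    hjChain F o = F (⋃ o' : Iio o, hjChain F o'.1) := by
  rw [hjChain]

theorem hjChain_mono {X : Type u} {F : Set X → Set X} (hF : ∀ S, S ⊆ F S)
    {o1 o2 : Ordinal.{u}} (h : o1 ≤ o2) : hjChain F o1 ⊆ hjChain F o2 := by
  rcases eq_or_lt_of_le h with rfl | h
  · exact subset_rfl
  · rw [hjChain_eq F o2]
    intro x hx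
    apply hF
    exact mem_iUnion.2 ⟨(⟨o1, h⟩ : Iio o2), hx⟩

theorem hjChain_card {X : Type u} {F : Set X → Set X} {c : Cardinal.{u}} (hc : ℵ₀ ≤ c)
    (hF : ∀ S : Set X, #S ≤ c → #(F S) ≤ c) {Θ : Ordinal.{u}} (hΘ : Θ.card ≤ c)
    {o : Ordinal.{u}} (ho : o < Θ) : #(hjChain F o) ≤ c := by
  induction o using Ordinal.induction with
  | h o IH =>
    rw [hjChain_eq]
    apply hF
    exact hj_mk_iUnion_Iio hc ((Ordinal.card_le_card ho.le).trans hΘ)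
      (fun o' => IH o'.1 o'.2 (o'.2.trans ho))

open Classical in
noncomputable def hjWitness {X : Type u} (x₀ : X) (s : Set X) : X :=
  if h : ∃ q, q ∉ s then h.choose else x₀

theorem hjWitness_spec {X : Type u} (x₀ : X) (s : Set X) (h : ∃ q, q ∉ s) :
    hjWitness x₀ s ∉ s := by
  rw [hjWitness, dif_pos h]; exact h.choose_spec


theorem hj_code_card {X K : Type u} {S : Set X} {κ : Cardinal.{u}} (hκ : ℵ₀ ≤ κ)
    (hK : #K = κ) (hS : #S ≤ 2 ^ κ) :
    #{g : (K × K) → X × K | ∀ pr, (g pr).1 ∈ S} ≤ 2 ^ κ := by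
  have h2κ : ℵ₀ ≤ 2 ^ κ := hκ.trans (cantor κ).le
  have hinj : #{g : (K × K) → X × K | ∀ pr, (g pr).1 ∈ S} ≤ #((K × K) → S × K) := by
    apply mk_le_of_injective
      (f := fun g : {g : (K × K) → X × K | ∀ pr, (g pr).1 ∈ S} =>
        fun pr => ((⟨(g.1 pr).1, g.2 pr⟩ : S), (g.1 pr).2))
    intro g1 g2 h
    ext pr
    · exact congrArg (fun f => ((f pr).1 : X)) h
    · exact congrArg (fun f => (f pr).2) h
  refine hinj.trans ?_
  have : #((K × K) → S × K) = (#S * κ) ^ κ := by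
    rw [← Cardinal.power_def]
    congr 1
    · simp [Cardinal.mk_prod, hK]
    · simp [Cardinal.mk_prod, hK, Cardinal.mul_eq_self hκ]
  rw [this]
  calc (#S * κ) ^ κ ≤ (2 ^ κ) ^ κ := by
        apply Cardinal.power_le_power_right
        calc #S * κ ≤ 2 ^ κ * 2 ^ κ := mul_le_mul' hS (cantor κ).le
          _ = 2 ^ κ := mul_eq_self h2κ
    _ = 2 ^ (κ * κ) := by rw [← Cardinal.power_mul]
    _ = 2 ^ κ := by rw [Cardinal.mul_eq_self hκ]

/-- Hajnal–Juhász: if `X` is Hausdorff, then `|X| ≤ 2 ^ (c(X) ⬝ χ(X))`. -/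
theorem hajnal_juhasz {X : Type u} [TopologicalSpace X] [T2Space X]
    (κ : Cardinal.{u}) (hκ : ℵ₀ ≤ κ)
    (hχ : ∀ x : X, ∃ B : Set (Set X), #B ≤ κ ∧
      (∀ U ∈ B, IsOpen U ∧ x ∈ U) ∧ ∀ V : Set X, IsOpen V → x ∈ V → ∃ U ∈ B, U ⊆ V)
    (hc : ∀ 𝒞 : Set (Set X), (∀ C ∈ 𝒞, IsOpen C ∧ C.Nonempty) →
      𝒞.PairwiseDisjoint id → #𝒞 ≤ κ) :
    #X ≤ 2 ^ κ := by
  classical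
  rcases isEmpty_or_nonempty X with hX | hX
  · haveI := hX
    rw [Cardinal.mk_eq_zero X]
    exact zero_le
  obtain ⟨x₀⟩ := hX
  choose B hBcard hBopen hBbase using hχ
  set K : Type u := κ.out with hKdef
  have hK : #K = κ := Cardinal.mk_out κ
  haveI hKne : Nonempty K := Cardinal.mk_ne_zero_iff.mp (by rw [hK]; exact (aleph0_pos.trans_le hκ).ne')
  have h2κ : ℵ₀ ≤ 2 ^ κ := hκ.trans (cantor κ).le
  have hBne : ∀ x : X, (B x).Nonempty := fun x => by
    obtain ⟨U, hU, -⟩ := hBbase x univ isOpen_univ (mem_univ x); exact ⟨U, hU⟩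
  have he : ∀ x : X, ∃ f : K → Set X, (∀ i, f i ∈ B x) ∧ ∀ U ∈ B x, ∃ i, f i = U :=
    fun x => hj_surj (hBne x) (by rw [hK]; exact hBcard x)
  choose e he1 he2 using he
  set T : ((K × K) → X × K) → Set X :=
    fun g => ⋃ γ : K, closure (⋃ δ : K, e (g (γ, δ)).1 (g (γ, δ)).2) with hT
  set F : Set X → Set X :=
    fun S => insert x₀ (S ∪ ((fun g => hjWitness x₀ (T g)) '' {g | ∀ pr, (g pr).1 ∈ S}))
    with hF
  have hFsub : ∀ S : Set X, S ⊆ F S :=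
    fun S => subset_union_left.trans (subset_insert _ _)
  have hFcard : ∀ S : Set X, #S ≤ 2 ^ κ → #(F S) ≤ 2 ^ κ := by
    intro S hS
    have himg : #((fun g => hjWitness x₀ (T g)) ''
        {g : (K × K) → X × K | ∀ pr, (g pr).1 ∈ S}) ≤ 2 ^ κ :=
      (mk_image_le).trans (hj_code_card hκ hK hS)
    calc #(F S) ≤ #(S ∪ ((fun g => hjWitness x₀ (T g)) ''
          {g : (K × K) → X × K | ∀ pr, (g pr).1 ∈ S}) : Set X) + 1 := mk_insert_le
      _ ≤ (#S + #((fun g => hjWitness x₀ (T g)) ''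
          {g : (K × K) → X × K | ∀ pr, (g pr).1 ∈ S})) + 1 :=
            add_le_add_left (mk_union_le _ _) 1
      _ ≤ (2 ^ κ + 2 ^ κ) + 1 := add_le_add_left (add_le_add hS himg) 1
      _ = 2 ^ κ + 1 := by rw [add_eq_self h2κ]
      _ = 2 ^ κ := by
          rw [add_one_eq h2κ]
  set Θ : Ordinal.{u} := (Order.succ κ).ord with hΘ
  have hΘlim : Order.IsSuccLimit Θ := Cardinal.isSuccLimit_ord (hκ.trans (Order.le_succ κ))
  have hΘcard : Θ.card ≤ 2 ^ κ := by
    rw [hΘ, Cardinal.card_ord]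
    exact Order.succ_le_of_lt (cantor κ)
  set A : Ordinal.{u} → Set X := hjChain F with hA
  set Atop : Set X := ⋃ o : Iio Θ, A o.1 with hAtopdef
  have hAcard : ∀ o < Θ, #(A o) ≤ 2 ^ κ := fun o ho => hjChain_card h2κ hFcard hΘcard ho
  have hAtopcard : #Atop ≤ 2 ^ κ :=
    hj_mk_iUnion_Iio h2κ hΘcard (fun o' => hAcard o'.1 o'.2)
  have hmemA : ∀ o, o < Θ → A o ⊆ Atop := fun o ho x hx =>
    mem_iUnion.2 ⟨(⟨o, ho⟩ : Iio Θ), hx⟩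
  have hx₀A : ∀ o, x₀ ∈ A o := fun o => by
    rw [hA, hjChain_eq]; exact mem_insert _ _
  have hAll : ∀ p : X, p ∈ Atop := by
    intro p
    by_contra hp
    have hsep0 : ∀ x : X, ∃ i γ : K, x ∈ Atop → e x i ∩ e p γ = ∅ := by
      intro x
      by_cases hx : x ∈ Atop
      · have hxp : x ≠ p := fun h => hp (h ▸ hx)
        obtain ⟨U, V, hU, hV, hxU, hpV, hUV⟩ := t2_separation hxp
        obtain ⟨U', hU'B, hU'⟩ := hBbase x U hU hxU
        obtain ⟨W, hWB, hW⟩ := hBbase p V hV hpV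
        obtain ⟨i, hi⟩ := he2 x U' hU'B
        obtain ⟨γ, hγ⟩ := he2 p W hWB
        refine ⟨i, γ, fun _ => ?_⟩
        rw [hi, hγ]
        apply eq_empty_of_subset_empty
        intro y hy
        exact (hUV.le_bot ⟨hU' hy.1, hW hy.2⟩ : y ∈ (∅ : Set X))
      · exact ⟨Classical.arbitrary K, Classical.arbitrary K, fun h => absurd h hx⟩
    choose ix γx hsep using hsep0
    set 𝒰 : K → Set (Set X) := fun γ => {U | ∃ x, x ∈ Atop ∧ γx x = γ ∧ U = e x (ix x)}
      with h𝒰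
    have h𝒰open : ∀ γ, ∀ U ∈ 𝒰 γ, IsOpen U := by
      rintro γ U ⟨x, hx, -, rfl⟩
      exact (hBopen x _ (he1 x (ix x))).1
    have hdense0 : ∀ γ, ∃ 𝒱 ⊆ 𝒰 γ, #𝒱 ≤ κ ∧ ⋃₀ (𝒰 γ) ⊆ closure (⋃₀ 𝒱) :=
      fun γ => hj_dense_subfamily κ hc (𝒰 γ) (h𝒰open γ)
    choose 𝒱 h𝒱sub h𝒱card h𝒱dense using hdense0
    have hself : ∀ x, x ∈ Atop → x ∈ ⋃₀ 𝒰 (γx x) := fun x hx =>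
      ⟨e x (ix x), ⟨x, hx, rfl, rfl⟩, (hBopen x _ (he1 x (ix x))).2⟩
    have hx₀top : x₀ ∈ Atop := hmemA 0 hΘlim.pos (hx₀A 0)
    have h𝒱γ0 : (𝒱 (γx x₀)).Nonempty := by
      by_contra hcontra
      rw [not_nonempty_iff_eq_empty] at hcontra
      have := h𝒱dense (γx x₀) (hself x₀ hx₀top)
      rw [hcontra] at this
      simp at this
    set 𝒱' : K → Set (Set X) := fun γ => if (𝒱 γ).Nonempty then 𝒱 γ else 𝒱 (γx x₀)
      with h𝒱'
    have h𝒱'ne : ∀ γ, (𝒱' γ).Nonempty := by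
      intro γ
      simp only [h𝒱']
      split_ifs with h
      exacts [h, h𝒱γ0]
    have h𝒱'sub : ∀ γ, ∃ γ', 𝒱' γ ⊆ 𝒰 γ' := by
      intro γ
      simp only [h𝒱']
      split_ifs with h
      exacts [⟨γ, h𝒱sub γ⟩, ⟨γx x₀, h𝒱sub (γx x₀)⟩]
    have h𝒱'card : ∀ γ, #(𝒱' γ) ≤ κ := by
      intro γ
      simp only [h𝒱']
      split_ifs with h
      exacts [h𝒱card γ, h𝒱card (γx x₀)]
    have h𝒱'dense : ∀ γ, ⋃₀ 𝒰 γ ⊆ closure (⋃₀ 𝒱' γ) := by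
      intro γ
      simp only [h𝒱']
      split_ifs with h
      · exact h𝒱dense γ
      · rw [not_nonempty_iff_eq_empty] at h
        intro x hx
        have := h𝒱dense γ hx
        rw [h] at this
        simp at this
    have hpnot : ∀ γ, p ∉ closure (⋃₀ 𝒱' γ) := by
      intro γ
      obtain ⟨γ', hsub⟩ := h𝒱'sub γ
      have hpin : p ∈ e p γ' := (hBopen p _ (he1 p γ')).2
      have hpopen : IsOpen (e p γ') := (hBopen p _ (he1 p γ')).1
      have hdisj : e p γ' ∩ ⋃₀ 𝒱' γ = ∅ := by
        apply eq_empty_of_subset_empty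
        rintro y ⟨hy1, V, hV, hy2⟩
        obtain ⟨x, hx, hγ', rfl⟩ := hsub hV
        have := hsep x hx
        rw [hγ'] at this
        rw [← this]
        exact ⟨hy2, hy1⟩
      intro hcl
      obtain ⟨y, hy1, hy2⟩ := mem_closure_iff.mp hcl (e p γ') hpopen hpin
      exact absurd (hdisj ▸ (⟨hy1, hy2⟩ : y ∈ e p γ' ∩ ⋃₀ 𝒱' γ)) (notMem_empty y)
    have hr : ∀ γ, ∃ f : K → Set X, (∀ δ, f δ ∈ 𝒱' γ) ∧ ∀ V ∈ 𝒱' γ, ∃ δ, f δ = V :=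
      fun γ => hj_surj (h𝒱'ne γ) (by rw [hK]; exact h𝒱'card γ)
    choose r hr1 hr2 using hr
    have hxg : ∀ γ δ : K, ∃ x, x ∈ Atop ∧ ∃ i, e x i = r γ δ := by
      intro γ δ
      obtain ⟨γ', hsub⟩ := h𝒱'sub γ
      obtain ⟨x, hx, -, hUx⟩ := hsub (hr1 γ δ)
      exact ⟨x, hx, ix x, hUx.symm⟩
    choose xg hxgA ig hig using hxg
    have hst : ∀ γ δ : K, ∃ o' : Iio Θ, xg γ δ ∈ A o'.1 := by
      intro γ δ
      have := hxgA γ δ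
      rwa [hAtopdef, mem_iUnion] at this
    choose og hog using hst
    set ostar : Ordinal.{u} := ⨆ pr : K × K, (og pr.1 pr.2).1 with hostar
    have hostarΘ : ostar < Θ := by
      apply Ordinal.iSup_lt_ord _ (fun pr : K × K => (og pr.1 pr.2).2)
      have hcof : Θ.cof = Order.succ κ := (Cardinal.isRegular_succ hκ).cof_eq
      rw [hcof]
      have : #(K × K) = κ := by simp [Cardinal.mk_prod, hK, Cardinal.mul_eq_self hκ]
      rw [this]
      exact Order.lt_succ κ
    have hxgstage : ∀ γ δ, xg γ δ ∈ A ostar := by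
      intro γ δ
      have hle : ((og γ δ : Iio Θ) : Ordinal.{u}) ≤ ostar := by
        rw [hostar]
        exact Ordinal.le_iSup (fun pr : K × K => ((og pr.1 pr.2 : Iio Θ) : Ordinal.{u}))
          ((γ, δ) : K × K)
      exact hjChain_mono hFsub hle (hog γ δ)
    set g : (K × K) → X × K := fun pr => (xg pr.1 pr.2, ig pr.1 pr.2) with hg
    have hdecode : ∀ γ : K, (⋃ δ : K, e (g (γ, δ)).1 (g (γ, δ)).2) = ⋃₀ 𝒱' γ := by
      intro γ
      apply subset_antisymm
      · intro y hy
        obtain ⟨δ, hyδ⟩ := mem_iUnion.mp hy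
        refine ⟨r γ δ, hr1 γ δ, ?_⟩
        rw [← hig γ δ]
        exact hyδ
      · rintro y ⟨V, hV, hyV⟩
        obtain ⟨δ, rfl⟩ := hr2 γ V hV
        exact mem_iUnion.2 ⟨δ, by rw [hg]; simp only; rw [hig γ δ]; exact hyV⟩
    have hTg : T g = ⋃ γ : K, closure (⋃₀ 𝒱' γ) := by
      rw [hT]
      exact iUnion_congr fun γ => by rw [hdecode γ]
    have hpT : p ∉ T g := by
      rw [hTg]
      intro h
      obtain ⟨γ, hγ⟩ := mem_iUnion.mp h
      exact hpnot γ hγ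
    set q : X := hjWitness x₀ (T g) with hqdef
    have hqwit : q ∉ T g := hjWitness_spec x₀ (T g) ⟨p, hpT⟩
    have hqA : q ∈ Atop := by
      have hostar1 : Order.succ ostar < Θ := hΘlim.succ_lt hostarΘ
      apply hmemA _ hostar1
      rw [hA, hjChain_eq]
      apply mem_insert_of_mem
      apply mem_union_right
      refine ⟨g, ?_, hqdef.symm⟩
      intro pr
      exact mem_iUnion.2 ⟨(⟨ostar, Order.lt_succ ostar⟩ : Iio (Order.succ ostar)),
        hxgstage pr.1 pr.2⟩
    have hqcl : q ∈ closure (⋃₀ 𝒱' (γx q)) :=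
      h𝒱'dense _ (hself _ hqA)
    exact hqwit (by rw [hTg]; exact mem_iUnion.2 ⟨γx q, hqcl⟩)
  have huniv : (univ : Set X) ⊆ Atop := fun x _ => hAll x
  calc #X = #(univ : Set X) := mk_univ.symm
    _ ≤ #Atop := mk_le_mk_of_subset huniv
    _ ≤ 2 ^ κ := hAtopcard
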